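/- Let $w$ be a word of length $r \geq 2$ with all letters distinct, let $\mathcal{O}$ (resp. $\mathcal{E}$) be the set of letters at odd (resp. even) positions of $w$, and let $L : (\mathbb{Z}/n\mathbb{Z})^d \to \Sigma$ be any labeling with $n \geq r$. Then each occurrence of $w$ contains exactly $r-1$ occurrences of an adjacent pair $(p, p+v)$ with $L(p) \in \mathcal{O}$, $L(p+v) \in \mathcal{E}$ or $L(p) \in \mathcal{E}$, $L(p+v) \in \mathcal{O}$, and distinct occurrences of $w$ give rise to disjoint sets of such adjacent pairs; consequently $(r-1) \cdot \#(w) \leq \#(\mathcal{O}\mathcal{E})$, where $\#(\mathcal{O}\mathcal{E})$ counts ordered pairs $(x,v)$ with $L(x) \in \mathcal{O}$ and $L(x+v) \in \mathcal{E}$ (or vice versa with the appropriate orientation fixed). -/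

import Mathlib

open Finset

/-- Counting lemma: `(r-1) · #(w) ≤ #(𝒪ℰ)`, where `#(𝒪ℰ)` counts ordered adjacent
pairs whose first label is a letter of `w` at an odd position and whose second label
is a letter of `w` at an even position (positions are 1-indexed, so `i : Fin r`
corresponds to position `i+1`, odd when `i.val` is even). -/
theorem stmt_17 (n d r : ℕ) [NeZero n] (hr : 2 ≤ r) (hn : r ≤ n)
    {Alphabet : Type*} [DecidableEq Alphabet]
    (w : Fin r → Alphabet) (hw : Function.Injective w)
    (L : (Fin d → ZMod n) → Alphabet) :
    (r - 1) * (Finset.univ.filter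
        (fun p : (Fin d → ZMod n) × (Fin d → ZMod n) =>
          (∀ j, p.2 j = 0 ∨ p.2 j = 1 ∨ p.2 j = -1) ∧ p.2 ≠ 0 ∧
          ∀ i : Fin r, L (p.1 + (i : ℕ) • p.2) = w i)).card
    ≤ (Finset.univ.filter
        (fun p : (Fin d → ZMod n) × (Fin d → ZMod n) =>
          (∀ j, p.2 j = 0 ∨ p.2 j = 1 ∨ p.2 j = -1) ∧ p.2 ≠ 0 ∧
          (∃ i : Fin r, (i : ℕ) % 2 = 0 ∧ L p.1 = w i) ∧
          (∃ i : Fin r, (i : ℕ) % 2 = 1 ∧ L (p.1 + p.2) = w i))).card := by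
  classical
  set A := Finset.univ.filter
      (fun p : (Fin d → ZMod n) × (Fin d → ZMod n) =>
        (∀ j, p.2 j = 0 ∨ p.2 j = 1 ∨ p.2 j = -1) ∧ p.2 ≠ 0 ∧
        ∀ i : Fin r, L (p.1 + (i : ℕ) • p.2) = w i) with hA
  set B := Finset.univ.filter
      (fun p : (Fin d → ZMod n) × (Fin d → ZMod n) =>
        (∀ j, p.2 j = 0 ∨ p.2 j = 1 ∨ p.2 j = -1) ∧ p.2 ≠ 0 ∧
        (∃ i : Fin r, (i : ℕ) % 2 = 0 ∧ L p.1 = w i) ∧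
        (∃ i : Fin r, (i : ℕ) % 2 = 1 ∧ L (p.1 + p.2) = w i)) with hB
  have hcard : (r - 1) * A.card = (A ×ˢ (univ : Finset (Fin (r-1)))).card := by
    simp [Finset.card_product, mul_comm]
  rw [hcard]
  apply Finset.card_le_card_of_injOn
      (fun q : ((Fin d → ZMod n) × (Fin d → ZMod n)) × Fin (r-1) =>
        if ((q.2 : ℕ)) % 2 = 0 then (q.1.1 + (q.2 : ℕ) • q.1.2, q.1.2)
        else (q.1.1 + ((q.2 : ℕ) + 1) • q.1.2, -q.1.2))
  · rintro ⟨⟨x, v⟩, k⟩ hq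
    obtain ⟨hqA, -⟩ := Finset.mem_product.mp hq
    obtain ⟨-, hv, hv0, hocc⟩ := Finset.mem_filter.mp hqA
    have hk : (k : ℕ) < r - 1 := k.isLt
    simp only [hB, Finset.mem_coe, Finset.mem_filter, Finset.mem_univ, true_and]
    by_cases h : (k : ℕ) % 2 = 0
    · rw [if_pos h]
      refine ⟨hv, hv0, ⟨⟨(k : ℕ), by omega⟩, by simpa using h, ?_⟩,
        ⟨⟨(k : ℕ) + 1, by omega⟩, by simp; omega, ?_⟩⟩
      · exact hocc ⟨(k : ℕ), by omega⟩
      · have := hocc ⟨(k : ℕ) + 1, by omega⟩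
        simp only at this ⊢
        rw [← this, succ_nsmul, add_assoc]
    · rw [if_neg h]
      refine ⟨?_, by simpa using hv0, ⟨⟨(k : ℕ) + 1, by omega⟩, by simp; omega, ?_⟩,
        ⟨⟨(k : ℕ), by omega⟩, by simpa using Nat.mod_two_ne_zero.mp h, ?_⟩⟩
      · intro j
        rcases hv j with h1 | h1 | h1
        · exact Or.inl (by simp only [Pi.neg_apply]; rw [show v j = 0 from h1]; simp)
        · exact Or.inr (Or.inr (by simp only [Pi.neg_apply]; rw [show v j = 1 from h1]))
        · exact Or.inr (Or.inl (by simp only [Pi.neg_apply]; rw [show v j = -1 from h1]; simp))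
      · exact hocc ⟨(k : ℕ) + 1, by omega⟩
      · have := hocc ⟨(k : ℕ), by omega⟩
        simp only at this ⊢
        rw [← this, succ_nsmul]
        abel_nf
  · rintro ⟨⟨x, v⟩, k⟩ hq ⟨⟨x', v'⟩, k'⟩ hq' heq
    obtain ⟨hqA, -⟩ := Finset.mem_product.mp hq
    obtain ⟨-, hv, hv0, hocc⟩ := Finset.mem_filter.mp hqA
    obtain ⟨hqA', -⟩ := Finset.mem_product.mp hq'
    obtain ⟨-, hv', hv0', hocc'⟩ := Finset.mem_filter.mp hqA'
    have hk : (k : ℕ) < r - 1 := k.isLt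
    have hk' : (k' : ℕ) < r - 1 := k'.isLt
    have key : ∀ (a b : ℕ) (ha : a < r) (hb : b < r),
        L (x + a • v) = L (x' + b • v') → a = b := by
      intro a b ha hb hL
      have e1 := hocc ⟨a, ha⟩
      have e2 := hocc' ⟨b, hb⟩
      simp only at e1 e2
      have : w (⟨a, ha⟩ : Fin r) = w (⟨b, hb⟩ : Fin r) := by
        rw [← e1, ← e2, hL]
      simpa using congrArg Fin.val (hw this)
    simp only at heq
    by_cases h : (k : ℕ) % 2 = 0 <;> by_cases h' : (k' : ℕ) % 2 = 0
    · rw [if_pos h, if_pos h'] at heq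
      obtain ⟨h1, h2⟩ := Prod.mk.injEq .. ▸ heq
      subst h2
      have hkk : (k : ℕ) = (k' : ℕ) := key _ _ (by omega) (by omega) (by rw [h1])
      have : k = k' := by ext; simpa using hkk
      subst this
      have : x = x' := by
        have := h1
        rwa [add_left_inj] at this
      subst this; rfl
    · rw [if_pos h, if_neg h'] at heq
      obtain ⟨h1, h2⟩ := Prod.mk.injEq .. ▸ heq
      have hkk : (k : ℕ) = (k' : ℕ) + 1 := key _ _ (by omega) (by omega) (by rw [h1])
      have h3 : x + ((k : ℕ) + 1) • v = x' + (k' : ℕ) • v' := by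
        rw [succ_nsmul, ← add_assoc, h1, h2, succ_nsmul]
        abel
      have hkk2 : (k : ℕ) + 1 = (k' : ℕ) := key _ _ (by omega) (by omega) (by rw [h3])
      exfalso; omega
    · rw [if_neg h, if_pos h'] at heq
      obtain ⟨h1, h2⟩ := Prod.mk.injEq .. ▸ heq
      have hkk : (k : ℕ) + 1 = (k' : ℕ) := key _ _ (by omega) (by omega) (by rw [h1])
      have h2' : v = -v' := by rw [← h2, neg_neg]
      have h3 : x + (k : ℕ) • v = x' + ((k' : ℕ) + 1) • v' := by
        have step : x + (k : ℕ) • v = x + ((k : ℕ) + 1) • v + -v := by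
          rw [succ_nsmul]; abel
        rw [step, h1, h2', neg_neg, succ_nsmul, add_assoc]
      have hkk2 : (k : ℕ) = (k' : ℕ) + 1 := key _ _ (by omega) (by omega) (by rw [h3])
      exfalso; omega
    · rw [if_neg h, if_neg h'] at heq
      obtain ⟨h1, h2⟩ := Prod.mk.injEq .. ▸ heq
      have h2' : v = v' := by
        have := congrArg Neg.neg h2; simpa using this
      subst h2'
      have hkk : (k : ℕ) + 1 = (k' : ℕ) + 1 := key _ _ (by omega) (by omega) (by rw [h1])
      have : k = k' := by ext; omega
      subst this
      have : x = x' := by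
        have := h1
        rwa [add_left_inj] at this
      subst this; rfl
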